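/- Let φ₁, φ₂ : ℝ³ → ℝ be twice continuously differentiable, let S ∈ ℝ³, and define ψ(x,y) := φ₁(x)·φ₂(y)·(1 + (1/2)‖x − y‖). Then there exist real constants C₀, C₁ and ε > 0, M ≥ 0 such that |ψ(S + u/2, S − u/2) − C₀ − C₁‖u‖| ≤ M‖u‖² for all ‖u‖ < ε, if and only if φ₂(S)·∇φ₁(S) − φ₁(S)·∇φ₂(S) = 0. -/

import Mathlib

open scoped RealInnerProductSpace

local notation "𝔼" => EuclideanSpace ℝ (Fin 3)

lemma taylor2 (F : 𝔼 → ℝ) (hF : ContDiff ℝ 2 F) :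
    ∃ δ > (0:ℝ), ∃ K ≥ (0:ℝ), ∀ u : 𝔼, ‖u‖ < δ →
      |F u - F 0 - fderiv ℝ F 0 u| ≤ K * ‖u‖ ^ 2 := by
  have hF1 : ContDiff ℝ 1 (fderiv ℝ F) := hF.fderiv_right (by norm_num)
  obtain ⟨K, t, ht, hlip⟩ := (hF1.contDiffAt (x := 0)).exists_lipschitzOnWith
  obtain ⟨δ, hδ, hball⟩ := Metric.mem_nhds_iff.mp ht
  refine ⟨δ, hδ, K, K.coe_nonneg, fun u hu => ?_⟩
  have hsub : Metric.closedBall (0:𝔼) ‖u‖ ⊆ t := fun z hz => hball (by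
    simp only [Metric.mem_closedBall, Metric.mem_ball, dist_zero_right] at *
    linarith)
  have h0t : (0:𝔼) ∈ t := hball (Metric.mem_ball_self hδ)
  have key := Convex.norm_image_sub_le_of_norm_fderiv_le'
    (f := F) (φ := fderiv ℝ F 0) (s := Metric.closedBall (0:𝔼) ‖u‖) (C := K * ‖u‖)
    (x := 0) (y := u)
    (fun x _ => (hF.differentiable (by norm_num)).differentiableAt)
    (fun z hz => by
      have h1 := hlip.dist_le_mul z (hsub hz) 0 h0t
      rw [dist_eq_norm, dist_eq_norm] at h1
      simp only [Metric.mem_closedBall, dist_zero_right] at hz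
      calc ‖fderiv ℝ F z - fderiv ℝ F 0‖ ≤ K * ‖z - 0‖ := h1
        _ ≤ K * ‖u‖ := by
            rw [sub_zero]
            exact mul_le_mul_of_nonneg_left hz K.coe_nonneg)
    (convex_closedBall _ _) (Metric.mem_closedBall_self (norm_nonneg u))
    (by simp)
  rw [Real.norm_eq_abs] at key
  simp only [sub_zero] at key
  calc |F u - F 0 - fderiv ℝ F 0 u| ≤ K * ‖u‖ * ‖u‖ := key
    _ = K * ‖u‖ ^ 2 := by ring

lemma grad_inner (φ : 𝔼 → ℝ) (x v : 𝔼) : fderiv ℝ φ x v = ⟪gradient φ x, v⟫ := by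
  rw [gradient, ← InnerProductSpace.toDual_apply_apply, LinearIsometryEquiv.apply_symm_apply]

section
variable (φ₁ φ₂ : 𝔼 → ℝ) (S : 𝔼)

noncomputable def Fc : 𝔼 → ℝ := fun u => φ₁ (S + (1/2 : ℝ) • u) * φ₂ (S - (1/2 : ℝ) • u)

noncomputable def Lc : 𝔼 →L[ℝ] ℝ :=
  φ₁ S • ((fderiv ℝ φ₂ S).comp (-((1/2:ℝ) • (ContinuousLinearMap.id ℝ 𝔼))))
    + φ₂ S • ((fderiv ℝ φ₁ S).comp ((1/2:ℝ) • (ContinuousLinearMap.id ℝ 𝔼)))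

lemma Fc_contDiff (h₁ : ContDiff ℝ 2 φ₁) (h₂ : ContDiff ℝ 2 φ₂) :
    ContDiff ℝ 2 (Fc φ₁ φ₂ S) := by
  have hA : ContDiff ℝ 2 (fun u : 𝔼 => S + (1/2:ℝ) • u) :=
    contDiff_const.add (contDiff_id.const_smul _)
  have hB : ContDiff ℝ 2 (fun u : 𝔼 => S - (1/2:ℝ) • u) :=
    contDiff_const.sub (contDiff_id.const_smul _)
  exact (h₁.comp hA).mul (h₂.comp hB)

lemma Fc_hasFDerivAt (h₁ : ContDiff ℝ 2 φ₁) (h₂ : ContDiff ℝ 2 φ₂) :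
    HasFDerivAt (Fc φ₁ φ₂ S) (Lc φ₁ φ₂ S) 0 := by
  set A : 𝔼 →L[ℝ] 𝔼 := (1/2:ℝ) • (ContinuousLinearMap.id ℝ 𝔼) with hAdef
  have hA : HasFDerivAt (fun u : 𝔼 => S + (1/2:ℝ) • u) A 0 :=
    ((hasFDerivAt_id (0:𝔼)).const_smul (1/2:ℝ)).const_add S
  have hB : HasFDerivAt (fun u : 𝔼 => S - (1/2:ℝ) • u) (-A) 0 := by
    have h : HasFDerivAt (fun u : 𝔼 => S + -((1/2:ℝ) • u)) (-A) 0 :=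
      (((hasFDerivAt_id (0:𝔼)).const_smul (1/2:ℝ)).neg).const_add S
    simpa [sub_eq_add_neg] using h
  have e0 : S + (1/2:ℝ) • (0:𝔼) = S := by simp
  have e0' : S - (1/2:ℝ) • (0:𝔼) = S := by simp
  have hg1 : HasFDerivAt φ₁ (fderiv ℝ φ₁ S) (S + (1/2:ℝ) • (0:𝔼)) := by
    rw [e0]; exact ((h₁.differentiable (by norm_num)) S).hasFDerivAt
  have hg2 : HasFDerivAt φ₂ (fderiv ℝ φ₂ S) (S - (1/2:ℝ) • (0:𝔼)) := by
    rw [e0']; exact ((h₂.differentiable (by norm_num)) S).hasFDerivAt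
  have h1 : HasFDerivAt (fun u : 𝔼 => φ₁ (S + (1/2:ℝ) • u)) ((fderiv ℝ φ₁ S).comp A) 0 :=
    HasFDerivAt.comp 0 hg1 hA
  have h2 : HasFDerivAt (fun u : 𝔼 => φ₂ (S - (1/2:ℝ) • u)) ((fderiv ℝ φ₂ S).comp (-A)) 0 :=
    HasFDerivAt.comp 0 hg2 hB
  have h3 : HasFDerivAt (Fc φ₁ φ₂ S)
      (φ₁ (S + (1/2:ℝ) • (0:𝔼)) • ((fderiv ℝ φ₂ S).comp (-A))
        + φ₂ (S - (1/2:ℝ) • (0:𝔼)) • ((fderiv ℝ φ₁ S).comp A)) 0 := h1.mul h2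
  rw [e0, e0'] at h3
  exact h3

lemma Lc_apply (u : 𝔼) :
    Lc φ₁ φ₂ S u = (1/2) * ⟪φ₂ S • gradient φ₁ S - φ₁ S • gradient φ₂ S, u⟫ := by
  simp only [Lc, ContinuousLinearMap.add_apply, ContinuousLinearMap.coe_smul',
    Pi.smul_apply, ContinuousLinearMap.coe_comp', Function.comp_apply,
    ContinuousLinearMap.neg_apply, ContinuousLinearMap.smul_apply,
    ContinuousLinearMap.coe_id', id_eq, map_neg, map_smul, smul_eq_mul]
  rw [inner_sub_left, real_inner_smul_left, real_inner_smul_left,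
    ← grad_inner, ← grad_inner]
  ring

end



/-- For distinct orbitals `φ₁, φ₂`, the trial wave function
`ψ(x,y) = φ₁(x)φ₂(y)(1 + ‖x−y‖/2)` admits in center-of-mass coordinates a local
expansion `C₀ + C₁‖u‖ + O(‖u‖²)` near `u = 0` iff
`φ₂(S)∇φ₁(S) − φ₁(S)∇φ₂(S) = 0`. -/
theorem cusp_condition_two_orbitals (φ₁ φ₂ : EuclideanSpace ℝ (Fin 3) → ℝ)
    (h₁ : ContDiff ℝ 2 φ₁) (h₂ : ContDiff ℝ 2 φ₂)
    (S : EuclideanSpace ℝ (Fin 3)) :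
    (∃ C₀ C₁ : ℝ, ∃ ε > (0:ℝ), ∃ M ≥ (0:ℝ),
      ∀ u : EuclideanSpace ℝ (Fin 3), ‖u‖ < ε →
        |φ₁ (S + (1/2 : ℝ) • u) * φ₂ (S - (1/2 : ℝ) • u) *
            (1 + (1/2) * ‖(S + (1/2 : ℝ) • u) - (S - (1/2 : ℝ) • u)‖)
          - C₀ - C₁ * ‖u‖| ≤ M * ‖u‖^2)
    ↔ φ₂ S • gradient φ₁ S - φ₁ S • gradient φ₂ S = 0 := by
  have hvec : ∀ u : 𝔼, (S + (1/2:ℝ) • u) - (S - (1/2:ℝ) • u) = u := fun u => by module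
  obtain ⟨δ, hδ, K, hK, hT⟩ := taylor2 _ (Fc_contDiff φ₁ φ₂ S h₁ h₂)
  rw [(Fc_hasFDerivAt φ₁ φ₂ S h₁ h₂).fderiv] at hT
  set g : 𝔼 := φ₂ S • gradient φ₁ S - φ₁ S • gradient φ₂ S with hgdef
  constructor
  · rintro ⟨C₀, C₁, ε, hε, M, hM, h⟩
    have hψ : ∀ u : 𝔼, ‖u‖ < ε →
        |Fc φ₁ φ₂ S u * (1 + (1/2) * ‖u‖) - C₀ - C₁ * ‖u‖| ≤ M * ‖u‖ ^ 2 := by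
      intro u hu
      have h' := h u hu
      rw [hvec u] at h'
      exact h'
    have hinner : ∀ v : 𝔼, ⟪g, v⟫ = 0 := by
      intro v
      set c : ℝ := ⟪g, v⟫ with hcdef
      set D : ℝ := (2*M + 2*K) * ‖v‖^2 with hDdef
      have ht0 : (0:ℝ) < min ε δ / (‖v‖ + 1) := by
        have : (0:ℝ) < min ε δ := lt_min hε hδ
        positivity
      have key : ∀ t ∈ Set.Ioo (0:ℝ) (min ε δ / (‖v‖+1)), |c| ≤ D * t := by
        rintro t ⟨ht, ht'⟩
        have hv1 : (0:ℝ) < ‖v‖ + 1 := by positivity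
        have hsmall : t * (‖v‖ + 1) < min ε δ := by
          rw [lt_div_iff₀ hv1] at ht'
          exact ht'
        have hn : ‖t • v‖ = t * ‖v‖ := by
          rw [norm_smul, Real.norm_eq_abs, abs_of_pos ht]
        have hn' : t * ‖v‖ < min ε δ := by nlinarith [norm_nonneg v]
        have hnε : ‖t • v‖ < ε := by rw [hn]; exact lt_of_lt_of_le hn' (min_le_left _ _)
        have hnδ : ‖t • v‖ < δ := by rw [hn]; exact lt_of_lt_of_le hn' (min_le_right _ _)
        have h1 := hψ (t • v) hnε
        have h2 := hψ (-(t • v)) (by rwa [norm_neg])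
        have ht1 := hT (t • v) hnδ
        have ht2 := hT (-(t • v)) (by rwa [norm_neg])
        have hL1 : Lc φ₁ φ₂ S (t • v) = (1/2) * (t * c) := by
          rw [Lc_apply, real_inner_smul_right, ← hgdef, ← hcdef]
        have hL2 : Lc φ₁ φ₂ S (-(t • v)) = -((1/2) * (t * c)) := by
          rw [map_neg, hL1]
        rw [norm_neg] at h2 ht2
        rw [hn] at h1 h2 ht1 ht2
        rw [hL1] at ht1
        rw [hL2] at ht2
        set a := Fc φ₁ φ₂ S (t • v)
        set b := Fc φ₁ φ₂ S (-(t • v))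
        set F0 := Fc φ₁ φ₂ S 0
        set n : ℝ := t * ‖v‖ with hndef
        have hn0 : (0:ℝ) ≤ n := mul_nonneg ht.le (norm_nonneg v)
        set P : ℝ := 1 + (1/2) * n with hPdef
        have hP1 : (1:ℝ) ≤ P := by rw [hPdef]; linarith
        have hPpos : (0:ℝ) < P := by linarith
        have hd : |(a - b) * P| ≤ 2 * (M * n^2) := by
          have e1 : (a*P - C₀ - C₁*n) - (b*P - C₀ - C₁*n) = (a - b) * P := by ring
          calc |(a - b) * P| = |(a*P - C₀ - C₁*n) - (b*P - C₀ - C₁*n)| := by rw [e1]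
            _ ≤ |a*P - C₀ - C₁*n| + |b*P - C₀ - C₁*n| := abs_sub _ _
            _ ≤ M * n^2 + M * n^2 := add_le_add h1 h2
            _ = 2 * (M * n^2) := by ring
        have hab : |a - b| ≤ 2 * (M * n^2) := by
          calc |a - b| = |a - b| * 1 := by ring
            _ ≤ |a - b| * P := mul_le_mul_of_nonneg_left hP1 (abs_nonneg _)
            _ = |(a - b) * P| := by rw [abs_mul, abs_of_pos hPpos]
            _ ≤ 2 * (M * n^2) := hd
        have htc : |t * c| ≤ 2 * (M * n^2) + (K * n^2 + K * n^2) := by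
          have e2 : t * c = (a - b)
              - ((a - F0 - (1/2) * (t * c)) - (b - F0 - -((1/2) * (t * c)))) := by ring
          calc |t * c| = |(a - b) - ((a - F0 - (1/2)*(t*c)) - (b - F0 - -((1/2)*(t*c))))| := by
                rw [← e2]
            _ ≤ |a - b| + |(a - F0 - (1/2)*(t*c)) - (b - F0 - -((1/2)*(t*c)))| := abs_sub _ _
            _ ≤ 2 * (M * n^2) + (|a - F0 - (1/2)*(t*c)| + |b - F0 - -((1/2)*(t*c))|) :=
                add_le_add hab (abs_sub _ _)
            _ ≤ 2 * (M * n^2) + (K * n^2 + K * n^2) := by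
                exact add_le_add le_rfl (add_le_add ht1 ht2)
        have hfin : |c| * t ≤ (D * t) * t := by
          have : |t * c| = |c| * t := by
            rw [abs_mul, abs_of_pos ht]; ring
          rw [this] at htc
          calc |c| * t ≤ 2 * (M * n^2) + (K * n^2 + K * n^2) := htc
            _ = (D * t) * t := by rw [hDdef, hndef]; ring
        exact le_of_mul_le_mul_right hfin ht
      have htend : Filter.Tendsto (fun t : ℝ => D * t) (nhdsWithin 0 (Set.Ioi 0)) (nhds 0) := by
        have h0 : Filter.Tendsto (fun t : ℝ => D * t) (nhds 0) (nhds (D * 0)) :=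
          (continuous_const.mul continuous_id).tendsto 0
        rw [mul_zero] at h0
        exact h0.mono_left nhdsWithin_le_nhds
      have hle : |c| ≤ 0 :=
        ge_of_tendsto htend (Filter.eventually_of_mem
          (Ioo_mem_nhdsGT_of_mem ⟨le_refl (0:ℝ), ht0⟩) key)
      exact abs_nonpos_iff.mp hle
    exact inner_self_eq_zero.mp (hinner g)
  · intro hg0
    refine ⟨Fc φ₁ φ₂ S 0, Fc φ₁ φ₂ S 0 * (1/2), min δ 1, lt_min hδ one_pos, 2*K,
      by linarith, fun u hu => ?_⟩
    rw [hvec u]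
    have hu1 : ‖u‖ < 1 := lt_of_lt_of_le hu (min_le_right _ _)
    have huδ : ‖u‖ < δ := lt_of_lt_of_le hu (min_le_left _ _)
    have hT' := hT u huδ
    have hL0 : Lc φ₁ φ₂ S u = 0 := by
      rw [Lc_apply, ← hgdef, hg0, inner_zero_left, mul_zero]
    rw [hL0, sub_zero] at hT'
    show |Fc φ₁ φ₂ S u * (1 + 1/2 * ‖u‖) - Fc φ₁ φ₂ S 0 - Fc φ₁ φ₂ S 0 * (1/2) * ‖u‖|
      ≤ 2*K * ‖u‖^2
    have e : Fc φ₁ φ₂ S u * (1 + 1/2 * ‖u‖) - Fc φ₁ φ₂ S 0 - Fc φ₁ φ₂ S 0 * (1/2) * ‖u‖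
        = (Fc φ₁ φ₂ S u - Fc φ₁ φ₂ S 0) * (1 + (1/2) * ‖u‖) := by ring
    rw [e, abs_mul, abs_of_pos (show (0:ℝ) < 1 + (1/2)*‖u‖ by positivity)]
    calc |Fc φ₁ φ₂ S u - Fc φ₁ φ₂ S 0| * (1 + 1/2 * ‖u‖)
        ≤ (K * ‖u‖^2) * (1 + 1/2 * ‖u‖) := mul_le_mul_of_nonneg_right hT' (by positivity)
      _ ≤ 2*K * ‖u‖^2 := by nlinarith [mul_nonneg hK (sq_nonneg ‖u‖), norm_nonneg u]
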